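/- Two-user Phase I solution (SIC order decoding user 1 first): if ∂η/∂P_1 ≥ ∂η/∂P_2 ≥ 0 at (P_1^max, P_2^max), then η is nondecreasing in both coordinates throughout the feasible region, so the EE maximizer is P_1 = P_1^max and P_2 = min(P_2^max, P_1^max g_1/((2^{R_1^min}−1)g_2) − σ²/g_2), i.e., user 2 transmits at the largest power compatible with user 1's QoS and its own power budget. -/

import Mathlib

private lemma log_lb {a b : ℝ} (ha : 0 < a) (hab : a ≤ b) :
    b - a ≤ b * (Real.log b - Real.log a) := by
  have hb : 0 < b := lt_of_lt_of_le ha hab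
  have h := Real.log_le_sub_one_of_pos (div_pos ha hb)
  rw [Real.log_div ha.ne' hb.ne'] at h
  have h2 : b * (a / b - 1) = a - b := by field_simp
  nlinarith [mul_le_mul_of_nonneg_left h hb.le]

set_option maxHeartbeats 1000000 in
theorem two_user_phase1 (g1 g2 σ2 Pf P1max P2max R1min R2min : ℝ)
    (hg : g2 ≤ g1) (hg2 : 0 < g2) (hσ : 0 < σ2) (hPf : 0 < Pf)
    (hR1 : 0 < R1min) (hR2 : 0 ≤ R2min)
    (η : ℝ → ℝ → ℝ)
    (hη : η = fun P1 P2 => Real.logb 2 (1 + (P1 * g1 + P2 * g2) / σ2) / (Pf + P1 + P2))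
    (dη : ℝ → ℝ → ℝ → ℝ)
    (hdη : dη = fun gl P1 P2 =>
      gl / (Real.log 2 * (σ2 + P1 * g1 + P2 * g2) * (Pf + P1 + P2))
        - Real.logb 2 (1 + (P1 * g1 + P2 * g2) / σ2) / (Pf + P1 + P2) ^ 2)
    (Feas : Set (ℝ × ℝ))
    (hFeas : Feas = {p : ℝ × ℝ | 0 ≤ p.1 ∧ p.1 ≤ P1max ∧ 0 ≤ p.2 ∧ p.2 ≤ P2max ∧
      ((2:ℝ) ^ R1min - 1) * (p.2 * g2 + σ2) ≤ p.1 * g1 ∧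
      ((2:ℝ) ^ R2min - 1) * σ2 ≤ p.2 * g2})
    (hfeas : Feas.Nonempty)
    (hsign : 0 ≤ dη g2 P1max P2max ∧ dη g2 P1max P2max ≤ dη g1 P1max P2max)
    (P2star : ℝ)
    (hP2star : P2star = min P2max (P1max * g1 / (((2:ℝ) ^ R1min - 1) * g2) - σ2 / g2)) :
    (∀ p ∈ Feas, ∀ q ∈ Feas, p.1 ≤ q.1 → p.2 ≤ q.2 → η p.1 p.2 ≤ η q.1 q.2) ∧
    (P1max, P2star) ∈ Feas ∧
    (∀ p ∈ Feas, η p.1 p.2 ≤ η P1max P2star) := by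
  have hg1 : 0 < g1 := lt_of_lt_of_le hg2 hg
  have hlog2 : (0:ℝ) < Real.log 2 := Real.log_pos (by norm_num)
  have hc : (0:ℝ) < (2:ℝ) ^ R1min - 1 := by
    have : (1:ℝ) < (2:ℝ) ^ R1min :=
      (Real.one_lt_rpow_iff_of_pos (by norm_num)).mpr (Or.inl ⟨by norm_num, hR1⟩)
    linarith
  obtain ⟨⟨w1, w2⟩, hw⟩ := hfeas
  rw [hFeas] at hw
  obtain ⟨hw1, hw1m, hw2, hw2m, hwq1, hwq2⟩ := hw
  simp only at hw1 hw1m hw2 hw2m hwq1 hwq2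
  have hP1m : 0 ≤ P1max := le_trans hw1 hw1m
  have hP2m : 0 ≤ P2max := le_trans hw2 hw2m
  set M : ℝ := P1max * g1 / (((2:ℝ) ^ R1min - 1) * g2) - σ2 / g2 with hM
  -- anyone satisfying QoS1 within power budget has second coord ≤ M
  have hMle : ∀ z1 z2 : ℝ, z1 ≤ P1max →
      ((2:ℝ) ^ R1min - 1) * (z2 * g2 + σ2) ≤ z1 * g1 → z2 ≤ M := by
    intro z1 z2 hz1 hq
    have h : ((2:ℝ) ^ R1min - 1) * (z2 * g2 + σ2) ≤ P1max * g1 :=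
      le_trans hq (mul_le_mul_of_nonneg_right hz1 hg1.le)
    have e : (z2 + σ2 / g2) * (((2:ℝ) ^ R1min - 1) * g2)
        = ((2:ℝ) ^ R1min - 1) * (z2 * g2 + σ2) := by field_simp
    have h2 : z2 + σ2 / g2 ≤ P1max * g1 / (((2:ℝ) ^ R1min - 1) * g2) := by
      rw [le_div_iff₀ (by positivity), e]; exact h
    rw [hM]; linarith
  -- η in log form
  have hηval : ∀ x y : ℝ, 0 ≤ x → 0 ≤ y →
      η x y = ((Real.log (σ2 + (x * g1 + y * g2)) - Real.log σ2) / Real.log 2) / (Pf + x + y) := by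
    intro x y hx hy
    have hA : (0:ℝ) < σ2 + (x * g1 + y * g2) := by
      nlinarith [mul_nonneg hx hg1.le, mul_nonneg hy hg2.le]
    have h1 : 1 + (x * g1 + y * g2) / σ2 = (σ2 + (x * g1 + y * g2)) / σ2 := by
      field_simp
    rw [hη]
    simp only
    rw [h1, Real.logb, Real.log_div hA.ne' hσ.ne']
  -- psi at the corner
  have hψmax : (σ2 + (P1max * g1 + P2max * g2)) *
      (Real.log (σ2 + (P1max * g1 + P2max * g2)) - Real.log σ2)
      ≤ g2 * (Pf + P1max + P2max) := by
    have h1 := hsign.1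
    rw [hdη] at h1
    simp only at h1
    set A := σ2 + (P1max * g1 + P2max * g2) with hAdef
    have hA : 0 < A := by
      have h0 : 0 ≤ P1max * g1 + P2max * g2 := by
        nlinarith [mul_nonneg hP1m hg1.le, mul_nonneg hP2m hg2.le]
      rw [hAdef]; linarith
    have hT : 0 < Pf + P1max + P2max := by linarith
    have h2 : 1 + (P1max * g1 + P2max * g2) / σ2 = A / σ2 := by rw [hAdef]; field_simp
    rw [h2, Real.logb, Real.log_div hA.ne' hσ.ne'] at h1
    have hA' : σ2 + P1max * g1 + P2max * g2 = A := by rw [hAdef]; ring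
    rw [hA'] at h1
    rw [sub_nonneg, div_le_div_iff₀ (by positivity) (by positivity)] at h1
    have e : (Real.log A - Real.log σ2) / Real.log 2 * (Real.log 2 * A * (Pf + P1max + P2max))
        = (Real.log A - Real.log σ2) * A * (Pf + P1max + P2max) := by
      field_simp
    rw [e] at h1
    have h1' : ((Real.log A - Real.log σ2) * A) * (Pf + P1max + P2max)
        ≤ (g2 * (Pf + P1max + P2max)) * (Pf + P1max + P2max) := by linarith
    have := le_of_mul_le_mul_right h1' hT
    linarith
  -- psi nonneg on the whole box
  have hψ : ∀ x y : ℝ, 0 ≤ x → x ≤ P1max → 0 ≤ y → y ≤ P2max →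
      (σ2 + (x * g1 + y * g2)) * (Real.log (σ2 + (x * g1 + y * g2)) - Real.log σ2)
        ≤ g2 * (Pf + x + y) := by
    intro x y hx hxm hy hym
    set A := σ2 + (x * g1 + y * g2) with hAdef
    set B := σ2 + (P1max * g1 + P2max * g2) with hBdef
    have hA : 0 < A := by
      have h0 : 0 ≤ x * g1 + y * g2 := by
        nlinarith [mul_nonneg hx hg1.le, mul_nonneg hy hg2.le]
      rw [hAdef]; linarith
    have hAB : A ≤ B := by
      rw [hAdef, hBdef]
      nlinarith [mul_le_mul_of_nonneg_right hxm hg1.le, mul_le_mul_of_nonneg_right hym hg2.le]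
    have hlb := log_lb hA hAB
    have hLA : 0 ≤ Real.log A - Real.log σ2 := by
      have : Real.log σ2 ≤ Real.log A := Real.log_le_log hσ (by rw [hAdef]; nlinarith [mul_nonneg hx hg1.le, mul_nonneg hy hg2.le])
      linarith
    have hgap : g2 * ((Pf + P1max + P2max) - (Pf + x + y)) ≤ B - A := by
      rw [hAdef, hBdef]
      nlinarith [mul_le_mul_of_nonneg_left hg (sub_nonneg.mpr hxm)]
    have k1 : 0 ≤ (B - A) * (Real.log A - Real.log σ2) :=
      mul_nonneg (sub_nonneg.mpr hAB) hLA
    nlinarith [hψmax, hlb, hgap, k1]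
  -- main monotonicity in log form
  have hmono : ∀ x y x' y' : ℝ, 0 ≤ x → 0 ≤ y → x ≤ x' → y ≤ y' → x' ≤ P1max → y' ≤ P2max →
      (Real.log (σ2 + (x * g1 + y * g2)) - Real.log σ2) * (Pf + x' + y')
        ≤ (Real.log (σ2 + (x' * g1 + y' * g2)) - Real.log σ2) * (Pf + x + y) := by
    intro x y x' y' hx hy hxx hyy hxm hym
    set A := σ2 + (x * g1 + y * g2) with hAdef
    set B := σ2 + (x' * g1 + y' * g2) with hBdef
    have hA : 0 < A := by
      have h0 : 0 ≤ x * g1 + y * g2 := by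
        nlinarith [mul_nonneg hx hg1.le, mul_nonneg hy hg2.le]
      rw [hAdef]; linarith
    have hAB : A ≤ B := by
      rw [hAdef, hBdef]
      nlinarith [mul_le_mul_of_nonneg_right hxx hg1.le, mul_le_mul_of_nonneg_right hyy hg2.le]
    have hB : 0 < B := lt_of_lt_of_le hA hAB
    have hlb := log_lb hA hAB
    have hσA : σ2 ≤ A := by
      rw [hAdef]
      nlinarith [mul_nonneg hx hg1.le, mul_nonneg hy hg2.le]
    have hLB : 0 ≤ Real.log B - Real.log σ2 := by
      have : Real.log σ2 ≤ Real.log B := Real.log_le_log hσ (le_trans hσA hAB)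
      linarith
    have hψq := hψ x' y' (le_trans hx hxx) hxm (le_trans hy hyy) hym
    rw [← hBdef] at hψq
    have hTp : 0 < Pf + x + y := by linarith
    have hTq : 0 < Pf + x' + y' := by linarith
    have hgap : g2 * ((Pf + x' + y') - (Pf + x + y)) ≤ B - A := by
      rw [hAdef, hBdef]
      nlinarith [mul_le_mul_of_nonneg_left hg (sub_nonneg.mpr hxx)]
    rw [← mul_le_mul_iff_right₀ hB]
    have m1 := mul_le_mul_of_nonneg_right hlb hTq.le
    have m2 := mul_le_mul_of_nonneg_right hψq
      (sub_nonneg.mpr (show (Pf + x + y) ≤ (Pf + x' + y') by linarith))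
    have m3 := mul_le_mul_of_nonneg_right hgap hTq.le
    nlinarith [m1, m2, m3]
  -- Part 1
  have part1 : ∀ p ∈ Feas, ∀ q ∈ Feas, p.1 ≤ q.1 → p.2 ≤ q.2 → η p.1 p.2 ≤ η q.1 q.2 := by
    intro p hp q hq h1 h2
    rw [hFeas] at hp hq
    obtain ⟨hp1, hp1m, hp2, hp2m, -, -⟩ := hp
    obtain ⟨hq1, hq1m, hq2, hq2m, -, -⟩ := hq
    rw [hηval p.1 p.2 hp1 hp2, hηval q.1 q.2 hq1 hq2]
    have hTp : 0 < Pf + p.1 + p.2 := by linarith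
    have hTq : 0 < Pf + q.1 + q.2 := by linarith
    have key := hmono p.1 p.2 q.1 q.2 hp1 hp2 h1 h2 hq1m hq2m
    rw [div_le_div_iff₀ hTp hTq, div_mul_eq_mul_div, div_mul_eq_mul_div,
      div_le_div_iff₀ hlog2 hlog2]
    have := mul_le_mul_of_nonneg_right key hlog2.le
    linarith
  -- Part 2: membership of the claimed optimum
  have hMnn : 0 ≤ M := by
    have : w2 ≤ M := hMle w1 w2 hw1m hwq1
    have hwg : 0 ≤ w2 * g2 := mul_nonneg hw2 hg2.le
    linarith [this, hw2]
  have hstar : (P1max, P2star) ∈ Feas := by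
    rw [hFeas, hP2star]
    have hw2M : w2 ≤ M := hMle w1 w2 hw1m hwq1
    have hw2star : w2 ≤ min P2max M := le_min hw2m hw2M
    refine ⟨hP1m, le_refl _, le_min hP2m hMnn, min_le_left _ _, ?_, ?_⟩
    · -- QoS1
      have hMg2 : ((2:ℝ) ^ R1min - 1) * (M * g2 + σ2) = P1max * g1 := by
        rw [hM]; field_simp; ring
      have hmin : min P2max M ≤ M := min_le_right _ _
      simp only
      have hmm := mul_le_mul_of_nonneg_left (mul_le_mul_of_nonneg_right hmin hg2.le) hc.le
      linarith
    · -- QoS2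
      simp only
      have : w2 * g2 ≤ (min P2max M) * g2 := mul_le_mul_of_nonneg_right hw2star hg2.le
      linarith [hwq2]
  refine ⟨part1, hstar, ?_⟩
  intro p hp
  have hp' := hp
  rw [hFeas] at hp'
  obtain ⟨hp1, hp1m, hp2, hp2m, hpq1, -⟩ := hp'
  have hp2M : p.2 ≤ M := hMle p.1 p.2 hp1m hpq1
  have := part1 p hp (P1max, P2star) hstar hp1m (by rw [hP2star]; exact le_min hp2m hp2M)
  simpa using this
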